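/- Let v ∈ H¹(Ω;ℝ²) be divergence-free and u ∈ H²(Ω;ℝ³) on the 2D torus. Then ∫_Ω v · div(∇u ⊙ ∇u) dx + ∫_Ω ∇u · ∇(v·∇u) dx = 0, where the second integrand is Σ_{α,i} ∂_α u^i ∂_α (Σ_j v^j ∂_j u^i). -/

import Mathlib

open MeasureTheory

noncomputable section

/-- The standard fundamental cell `(0,1)²` of the two-dimensional torus. -/
def Torus : Set (EuclideanSpace ℝ (Fin 2)) := {x | ∀ i : Fin 2, x i ∈ Set.Ioo (0 : ℝ) 1}

/-- `f` is `1`-periodic in each coordinate direction. -/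
def IsPer {F : Type*} (f : EuclideanSpace ℝ (Fin 2) → F) : Prop :=
  ∀ (x : EuclideanSpace ℝ (Fin 2)) (i : Fin 2), f (x + EuclideanSpace.single i 1) = f x

/-- Directional derivative `∂_α u`. -/
def pd {F : Type*} [NormedAddCommGroup F] [NormedSpace ℝ F]
    (α : Fin 2) (u : EuclideanSpace ℝ (Fin 2) → F) (x : EuclideanSpace ℝ (Fin 2)) : F :=
  fderiv ℝ u x (EuclideanSpace.single α 1)

local notation "E2" => EuclideanSpace ℝ (Fin 2)
local notation "E3" => EuclideanSpace ℝ (Fin 3)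

section pdlemmas

variable {G : Type*} [NormedAddCommGroup G] [NormedSpace ℝ G]

lemma pd_sum {ι : Type*} (j : Fin 2) (s : Finset ι) (f : ι → E2 → G) (x : E2)
    (hf : ∀ i ∈ s, DifferentiableAt ℝ (f i) x) :
    pd j (fun y => ∑ i ∈ s, f i y) x = ∑ i ∈ s, pd j (f i) x := by
  unfold pd
  rw [fderiv_fun_sum hf, ContinuousLinearMap.sum_apply]

lemma pd_add (j : Fin 2) (f g : E2 → G) (x : E2)
    (hf : DifferentiableAt ℝ f x) (hg : DifferentiableAt ℝ g x) :
    pd j (fun y => f y + g y) x = pd j f x + pd j g x := by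
  unfold pd
  rw [fderiv_fun_add hf hg, ContinuousLinearMap.add_apply]

lemma pd_mul (j : Fin 2) (f g : E2 → ℝ) (x : E2)
    (hf : DifferentiableAt ℝ f x) (hg : DifferentiableAt ℝ g x) :
    pd j (fun y => f y * g y) x = pd j f x * g x + f x * pd j g x := by
  unfold pd
  rw [fderiv_fun_mul hf hg]
  simp [smul_eq_mul]
  ring

lemma pd_const_mul (j : Fin 2) (c : ℝ) (f : E2 → ℝ) (x : E2)
    (hf : DifferentiableAt ℝ f x) :
    pd j (fun y => c * f y) x = c * pd j f x := by
  unfold pd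
  rw [fderiv_const_mul hf c]
  simp

lemma pd_smul (j : Fin 2) (f : E2 → ℝ) (g : E2 → G) (x : E2)
    (hf : DifferentiableAt ℝ f x) (hg : DifferentiableAt ℝ g x) :
    pd j (fun y => f y • g y) x = pd j f x • g x + f x • pd j g x := by
  unfold pd
  rw [fderiv_fun_smul hf hg]
  simp [add_comm]

lemma pd_inner (j : Fin 2) (f g : E2 → E3) (x : E2)
    (hf : DifferentiableAt ℝ f x) (hg : DifferentiableAt ℝ g x) :
    pd j (fun y => inner (𝕜 := ℝ) (f y) (g y)) x
      = inner (𝕜 := ℝ) (f x) (pd j g x) + inner (𝕜 := ℝ) (pd j f x) (g x) := by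
  unfold pd
  exact fderiv_inner_apply ℝ hf hg _

/-- fderiv is invariant under a translation leaving `f` invariant. -/
lemma fderiv_shift (f : E2 → G) (t x : E2) (h : ∀ y, f (y + t) = f y) :
    fderiv ℝ f (x + t) = fderiv ℝ f x := by
  by_cases hd : DifferentiableAt ℝ f (x + t)
  · have h1 : HasFDerivAt (fun y : E2 => y + t) (ContinuousLinearMap.id ℝ E2) x :=
      (hasFDerivAt_id x).add_const t
    have h2 := hd.hasFDerivAt.comp x h1
    have h3 : (f ∘ fun y : E2 => y + t) = f := funext fun y => h y
    rw [h3] at h2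
    rw [h2.fderiv, ContinuousLinearMap.comp_id]
  · have hd' : ¬ DifferentiableAt ℝ f x := by
      intro hx
      apply hd
      have h1 : HasFDerivAt (fun y : E2 => y - t) (ContinuousLinearMap.id ℝ E2) (x + t) :=
        (hasFDerivAt_id (x + t)).sub_const t
      have hx' : HasFDerivAt f (fderiv ℝ f x) (x + t - t) := by simpa using hx.hasFDerivAt
      have h2 := hx'.comp (x + t) h1
      have h3 : (f ∘ fun y : E2 => y - t) = f := by
        funext y
        have := h (y - t)
        simpa using this.symm
      rw [h3] at h2
      exact h2.differentiableAt
    rw [fderiv_zero_of_not_differentiableAt hd, fderiv_zero_of_not_differentiableAt hd']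

lemma isPer_pd {f : E2 → G} (h : IsPer f) (j : Fin 2) : IsPer (pd j f) := by
  intro x i
  show fderiv ℝ f (x + _) _ = fderiv ℝ f x _
  rw [fderiv_shift f _ x (fun y => h y i)]

end pdlemmas

lemma insertNth_one_eq (i : Fin (1+1)) (y : Fin 1 → ℝ) :
    (Fin.insertNth i (1:ℝ) y : Fin (1+1) → ℝ)
      = (Fin.insertNth i (0:ℝ) y : Fin (1+1) → ℝ) + Pi.single i 1 := by
  funext j
  refine Fin.succAboveCases i ?_ ?_ j
  · simp
  · intro k
    simp [Fin.insertNth_apply_succAbove, Pi.single_eq_of_ne (Fin.succAbove_ne i k)]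

lemma psi_single (i : Fin 2) :
    ((EuclideanSpace.equiv (Fin 2) ℝ).symm (Pi.single i (1:ℝ))) = EuclideanSpace.single i 1 := by
  rfl

/-- Integral over the torus cell of a sum of coordinate derivatives of periodic `C¹`
functions vanishes. -/
lemma integral_sum_pd (F : Fin 2 → E2 → ℝ)
    (hF : ∀ j, ContDiff ℝ 1 (F j)) (hper : ∀ j, IsPer (F j)) :
    ∫ x in Torus, (∑ j, pd j (F j) x) = 0 := by
  set ψ : (Fin 2 → ℝ) ≃L[ℝ] EuclideanSpace ℝ (Fin 2) := (EuclideanSpace.equiv (Fin 2) ℝ).symm with hψ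
  have hmp : MeasurePreserving (⇑ψ) volume volume :=
    PiLp.volume_preserving_toLp (Fin 2)
  have hemb : MeasurableEmbedding (⇑ψ) :=
    (MeasurableEquiv.toLp 2 (Fin 2 → ℝ)).measurableEmbedding
  have hpre : (⇑ψ) ⁻¹' Torus = Set.pi Set.univ (fun _ : Fin 2 => Set.Ioo (0:ℝ) 1) := by
    ext y
    simp [Torus, Set.mem_pi]
    rfl
  have h1 : (∫ x in Torus, (∑ j, pd j (F j) x))
      = ∫ y in (⇑ψ) ⁻¹' Torus, (∑ j, pd j (F j) (ψ y)) :=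
    (hmp.setIntegral_preimage_emb hemb _ _).symm
  rw [h1, hpre]
  have h2 : ∫ y in Set.pi Set.univ (fun _ : Fin 2 => Set.Ioo (0:ℝ) 1),
        (∑ j, pd j (F j) (ψ y))
      = ∫ y in Set.Icc (0 : Fin 2 → ℝ) 1, (∑ j, pd j (F j) (ψ y)) :=
    setIntegral_congr_set Measure.univ_pi_Ioo_ae_eq_Icc
  rw [h2]
  have hdiff : ∀ j, Differentiable ℝ (F j) := fun j => (hF j).differentiable one_ne_zero
  have key := integral_divergence_of_hasFDerivAt_off_countable' (n := 1)
    (0 : Fin (1+1) → ℝ) (1 : Fin (1+1) → ℝ) (by intro i; norm_num)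
    (fun i y => F i (ψ y))
    (fun i y => (fderiv ℝ (F i) (ψ y)).comp (ψ : (Fin (1+1) → ℝ) →L[ℝ] EuclideanSpace ℝ (Fin 2)))
    ∅ Set.countable_empty
    (fun i => ((hF i).continuous.comp ψ.continuous).continuousOn)
    (fun x _ i => ((hdiff i (ψ x)).hasFDerivAt).comp x ψ.hasFDerivAt)
    (ContinuousOn.integrableOn_compact isCompact_Icc
      (Continuous.continuousOn (continuous_finset_sum _ fun i _ =>
        (((hF i).continuous_fderiv one_ne_zero).comp ψ.continuous).clm_apply continuous_const)))
  have heq : ∀ y : Fin (1+1) → ℝ,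
      (∑ i, ((fderiv ℝ (F i) (ψ y)).comp (ψ : (Fin (1+1) → ℝ) →L[ℝ] EuclideanSpace ℝ (Fin 2)))
        (Pi.single i 1)) = ∑ j, pd j (F j) (ψ y) := by
    intro y
    refine Finset.sum_congr rfl fun i _ => ?_
    show fderiv ℝ (F i) (ψ y) (ψ (Pi.single i 1)) = fderiv ℝ (F i) (ψ y) (EuclideanSpace.single i 1)
    rw [psi_single]
  rw [show (∫ y in Set.Icc (0 : Fin 2 → ℝ) 1, (∑ j, pd j (F j) (ψ y)))
      = ∫ y in Set.Icc (0 : Fin (1+1) → ℝ) 1,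
          (∑ i, ((fderiv ℝ (F i) (ψ y)).comp
            (ψ : (Fin (1+1) → ℝ) →L[ℝ] EuclideanSpace ℝ (Fin 2))) (Pi.single i 1)) from
    setIntegral_congr_fun measurableSet_Icc (fun y _ => (heq y).symm)]
  rw [key]
  refine Finset.sum_eq_zero fun i _ => ?_
  have hfr : ∀ y : Fin 1 → ℝ,
      F i (ψ (Fin.insertNth i ((1 : Fin (1+1) → ℝ) i) y))
        = F i (ψ (Fin.insertNth i ((0 : Fin (1+1) → ℝ) i) y)) := by
    intro y
    have : ψ (Fin.insertNth i ((1 : Fin (1+1) → ℝ) i) y)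
        = ψ (Fin.insertNth i ((0 : Fin (1+1) → ℝ) i) y) + EuclideanSpace.single i 1 := by
      show ψ (Fin.insertNth i (1:ℝ) y) = ψ (Fin.insertNth i (0:ℝ) y) + EuclideanSpace.single i 1
      rw [insertNth_one_eq, map_add, psi_single]
    rw [this, hper i _ i]
  rw [setIntegral_congr_fun measurableSet_Icc (fun y _ => hfr y)]
  exact sub_self _


local notation "sgl" i => EuclideanSpace.single i (1:ℝ)

/-- Coupling cancellation: for `v` divergence-free periodic `H¹` (here `C¹`) and
`u ∈ H²` (here `C²`) on the 2D torus:
`∫ v · div(∇u ⊙ ∇u) dx + ∫ ∇u · ∇(v·∇u) dx = 0`. -/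
theorem coupling_cancellation
    (v : EuclideanSpace ℝ (Fin 2) → Fin 2 → ℝ)
    (u : EuclideanSpace ℝ (Fin 2) → EuclideanSpace ℝ (Fin 3))
    (hv : ContDiff ℝ 1 v) (hvper : IsPer v)
    (hdiv : ∀ x, ∑ i : Fin 2, fderiv ℝ (fun y => v y i) x (EuclideanSpace.single i 1) = 0)
    (hu : ContDiff ℝ 2 u) (huper : IsPer u) :
    (∫ x in Torus,
        ∑ i : Fin 2, v x i *
          ∑ j : Fin 2, fderiv ℝ (fun y => inner (𝕜 := ℝ) (pd j u y) (pd i u y)) x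
            (EuclideanSpace.single j 1))
      + (∫ x in Torus,
          ∑ α : Fin 2, inner (𝕜 := ℝ) (pd α u x)
            (fderiv ℝ (fun y => ∑ j : Fin 2, v y j • pd j u y) x
              (EuclideanSpace.single α 1))) = 0 := by
  classical
  -- basic regularity facts
  have hvi : ∀ i, ContDiff ℝ 1 (fun y => v y i) := fun i => contDiff_pi.1 hv i
  have hDu : ContDiff ℝ 1 (fderiv ℝ u) := hu.fderiv_right (by norm_num)
  have hpdu : ∀ α, ContDiff ℝ 1 (pd α u) := fun α => hDu.clm_apply contDiff_const
  have dvi : ∀ i x, DifferentiableAt ℝ (fun y => v y i) x :=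
    fun i x => ((hvi i).differentiable one_ne_zero) x
  have dpdu : ∀ α x, DifferentiableAt ℝ (pd α u) x :=
    fun α x => ((hpdu α).differentiable one_ne_zero) x
  have dDu : ∀ x, DifferentiableAt ℝ (fderiv ℝ u) x := fun x => (hDu.differentiable one_ne_zero) x
  -- Clairaut
  have hsymm : ∀ (x) (j α : Fin 2), pd j (pd α u) x = pd α (pd j u) x := by
    intro x j α
    have hrep : ∀ β γ : Fin 2, pd β (pd γ u) x
        = fderiv ℝ (fderiv ℝ u) x (sgl β) (sgl γ) := by
      intro β γ
      show fderiv ℝ (fun y => fderiv ℝ u y (sgl γ)) x (sgl β) = _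
      rw [fderiv_clm_apply (dDu x) (differentiableAt_const _)]
      simp
    rw [hrep, hrep, (hu.contDiffAt.isSymmSndFDerivAt (by simp)).eq]
  -- periodicity
  have hPv : ∀ k, IsPer (fun y => v y k) := by
    intro k x i
    show v (x + EuclideanSpace.single i 1) k = v x k
    rw [hvper x i]
  have hPpdu : ∀ α, IsPer (pd α u) := fun α => isPer_pd huper α
  -- auxiliary functions
  set S : E2 → ℝ := fun y => ∑ α, inner (𝕜 := ℝ) (pd α u y) (pd α u y) with hSdef
  set Fj : Fin 2 → E2 → ℝ := fun j y =>
    (∑ i, v y i * inner (𝕜 := ℝ) (pd j u y) (pd i u y)) + 2⁻¹ * (v y j * S y) with hFjdef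
  have hinner : ∀ α β : Fin 2,
      ContDiff ℝ 1 (fun y => inner (𝕜 := ℝ) (pd α u y) (pd β u y)) :=
    fun α β => (hpdu α).inner ℝ (hpdu β)
  have dinner : ∀ (α β : Fin 2) (x),
      DifferentiableAt ℝ (fun y => inner (𝕜 := ℝ) (pd α u y) (pd β u y)) x :=
    fun α β x => ((hinner α β).differentiable one_ne_zero) x
  have hScd : ContDiff ℝ 1 S := ContDiff.sum fun α _ => hinner α α
  have dS : ∀ x, DifferentiableAt ℝ S x := fun x => (hScd.differentiable one_ne_zero) x
  have hFcd : ∀ j, ContDiff ℝ 1 (Fj j) := fun j =>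
    (ContDiff.sum fun i _ => (hvi i).mul (hinner j i)).add
      (contDiff_const.mul ((hvi j).mul hScd))
  have hFper : ∀ j, IsPer (Fj j) := by
    intro j x i
    have hv' := hvper x i
    have hp' : ∀ α, pd α u (x + EuclideanSpace.single i 1) = pd α u x := fun α => hPpdu α x i
    simp only [hFjdef, hSdef, hv', hp']
  -- integrability of the two integrands
  have hG : ContDiff ℝ 1 (fun y => ∑ j, v y j • pd j u y) :=
    ContDiff.sum fun j _ => (hvi j).smul (hpdu j)
  have hcI1 : Continuous (fun x => ∑ i : Fin 2, v x i *
      ∑ j : Fin 2, fderiv ℝ (fun y => inner (𝕜 := ℝ) (pd j u y) (pd i u y)) x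
        (EuclideanSpace.single j 1)) :=
    continuous_finset_sum _ fun i _ => ((hvi i).continuous).mul
      (continuous_finset_sum _ fun j _ =>
        (((hinner j i).continuous_fderiv one_ne_zero)).clm_apply continuous_const)
  have hcI2 : Continuous (fun x => ∑ α : Fin 2, inner (𝕜 := ℝ) (pd α u x)
      (fderiv ℝ (fun y => ∑ j : Fin 2, v y j • pd j u y) x (EuclideanSpace.single α 1))) :=
    continuous_finset_sum _ fun α _ => Continuous.inner ((hpdu α).continuous)
      ((hG.continuous_fderiv one_ne_zero).clm_apply continuous_const)
  have hTK : Torus ⊆ {x : E2 | ∀ i, x i ∈ Set.Icc (0:ℝ) 1} :=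
    fun x hx i => Set.Ioo_subset_Icc_self (hx i)
  have hK : IsCompact {x : E2 | ∀ i, x i ∈ Set.Icc (0:ℝ) 1} := by
    have himg : {x : E2 | ∀ i, x i ∈ Set.Icc (0:ℝ) 1}
        = (EuclideanSpace.equiv (Fin 2) ℝ).symm '' (Set.Icc (0 : Fin 2 → ℝ) 1) := by
      ext x
      constructor
      · intro hx
        refine ⟨(EuclideanSpace.equiv (Fin 2) ℝ) x, ?_, (EuclideanSpace.equiv (Fin 2) ℝ).symm_apply_apply x⟩
        rw [Set.mem_Icc]
        exact ⟨fun i => (hx i).1, fun i => (hx i).2⟩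
      · rintro ⟨y, hy, rfl⟩
        rw [Set.mem_Icc] at hy
        intro i
        exact ⟨hy.1 i, hy.2 i⟩
    rw [himg]
    exact isCompact_Icc.image (EuclideanSpace.equiv (Fin 2) ℝ).symm.continuous
  have hI1int : IntegrableOn (fun x => ∑ i : Fin 2, v x i *
      ∑ j : Fin 2, fderiv ℝ (fun y => inner (𝕜 := ℝ) (pd j u y) (pd i u y)) x
        (EuclideanSpace.single j 1)) Torus :=
    (ContinuousOn.integrableOn_compact hK hcI1.continuousOn).mono_set hTK
  have hI2int : IntegrableOn (fun x => ∑ α : Fin 2, inner (𝕜 := ℝ) (pd α u x)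
      (fderiv ℝ (fun y => ∑ j : Fin 2, v y j • pd j u y) x (EuclideanSpace.single α 1)))
      Torus :=
    (ContinuousOn.integrableOn_compact hK hcI2.continuousOn).mono_set hTK
  -- key pointwise identity
  have key : ∀ x, (∑ i : Fin 2, v x i *
        ∑ j : Fin 2, fderiv ℝ (fun y => inner (𝕜 := ℝ) (pd j u y) (pd i u y)) x
          (EuclideanSpace.single j 1))
      + (∑ α : Fin 2, inner (𝕜 := ℝ) (pd α u x)
          (fderiv ℝ (fun y => ∑ j : Fin 2, v y j • pd j u y) x (EuclideanSpace.single α 1)))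
      = ∑ j, pd j (Fj j) x := by
    intro x
    show (∑ i : Fin 2, v x i *
        ∑ j : Fin 2, pd j (fun y => inner (𝕜 := ℝ) (pd j u y) (pd i u y)) x)
      + (∑ α : Fin 2, inner (𝕜 := ℝ) (pd α u x)
          (pd α (fun y => ∑ j : Fin 2, v y j • pd j u y) x))
      = ∑ j, pd j (Fj j) x
    have E2'' : ∀ α : Fin 2, inner (𝕜 := ℝ) (pd α u x)
        (pd α (fun y => ∑ j : Fin 2, v y j • pd j u y) x)
        = ∑ j : Fin 2, (pd α (fun y => v y j) x * inner (𝕜 := ℝ) (pd α u x) (pd j u x)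
            + v x j * inner (𝕜 := ℝ) (pd α u x) (pd j (pd α u) x)) := by
      intro α
      rw [pd_sum α Finset.univ (fun j y => v y j • pd j u y) x (fun j _ => (dvi j x).smul (dpdu j x))]
      rw [inner_sum]
      refine Finset.sum_congr rfl fun j _ => ?_
      rw [pd_smul α _ _ x (dvi j x) (dpdu j x)]
      rw [inner_add_right, real_inner_smul_right, real_inner_smul_right, hsymm x α j]
    have EF : ∀ j : Fin 2, pd j (Fj j) x
        = (∑ i : Fin 2, (pd j (fun y => v y i) x * inner (𝕜 := ℝ) (pd j u x) (pd i u x)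
            + v x i * pd j (fun y => inner (𝕜 := ℝ) (pd j u y) (pd i u y)) x))
          + 2⁻¹ * (pd j (fun y => v y j) x * S x
            + v x j * (∑ α : Fin 2, 2 * inner (𝕜 := ℝ) (pd α u x) (pd j (pd α u) x))) := by
      intro j
      have dA : DifferentiableAt ℝ
          (fun y => ∑ i : Fin 2, v y i * inner (𝕜 := ℝ) (pd j u y) (pd i u y)) x :=
        DifferentiableAt.fun_sum fun i _ => (dvi i x).mul (dinner j i x)
      have dB : DifferentiableAt ℝ (fun y => 2⁻¹ * (v y j * S y)) x :=
        (differentiableAt_const _).mul ((dvi j x).mul (dS x))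
      have h1 : pd j (Fj j) x
          = pd j (fun y => ∑ i : Fin 2, v y i * inner (𝕜 := ℝ) (pd j u y) (pd i u y)) x
            + pd j (fun y => 2⁻¹ * (v y j * S y)) x := by
        rw [hFjdef]
        exact pd_add j _ _ x dA dB
      rw [h1]
      rw [pd_sum j Finset.univ (fun i y => v y i * inner (𝕜 := ℝ) (pd j u y) (pd i u y)) x (fun i _ => (dvi i x).mul (dinner j i x))]
      rw [pd_const_mul j _ (fun y => v y j * S y) x ((dvi j x).mul (dS x))]
      rw [pd_mul j (fun y => v y j) S x (dvi j x) (dS x)]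
      have hpdS : pd j S x = ∑ α : Fin 2, 2 * inner (𝕜 := ℝ) (pd α u x) (pd j (pd α u) x) := by
        rw [hSdef]
        rw [pd_sum j Finset.univ _ x (fun α _ => dinner α α x)]
        refine Finset.sum_congr rfl fun α _ => ?_
        rw [pd_inner j _ _ x (dpdu α x) (dpdu α x)]
        rw [real_inner_comm (pd j (pd α u) x) (pd α u x)]
        ring
      rw [hpdS]
      refine congrArg₂ (· + ·) ?_ rfl
      refine Finset.sum_congr rfl fun i _ => ?_
      rw [pd_mul j _ _ x (dvi i x) (dinner j i x)]
    have hdivx : pd (0 : Fin 2) (fun y => v y 0) x + pd 1 (fun y => v y 1) x = 0 := by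
      have h := hdiv x
      rw [Fin.sum_univ_two] at h
      exact h
    simp only [E2'', EF]
    simp only [Fin.sum_univ_two]
    linear_combination (-(2⁻¹ * S x)) * hdivx
  -- assemble
  rw [← integral_add hI1int hI2int]
  rw [integral_congr_ae (Filter.Eventually.of_forall fun x => key x)]
  exact integral_sum_pd Fj hFcd hFper

end
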